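/- In an ICC digraph, any directed cycle that contains a vertex v of a Type-II path P_{i,j} must also contain the terminal vertex v_{n_j}^j of the Type-I path P_j. -/

import Mathlib

/-- An ICC digraph with `k` Type-I paths. `n1 i ≥ 1` is the number of vertices of
Type-I path `P_i`; `n2 i j` is the number of vertices of Type-II path `P_{i,j}`
(`0` if empty, and `n2 i i = 0`); `q i j` (1-based, `1 ≤ q i j ≤ n1 j`) is the
index of the vertex of `P_j` that the arc leaving `P_{i,j}` (or, if `P_{i,j}` is
empty, the arc leaving the terminal vertex of `P_i`) points to. -/
structure ICCDigraph (k : ℕ) where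
  n1 : Fin k → ℕ
  hn1 : ∀ i, 1 ≤ n1 i
  n2 : Fin k → Fin k → ℕ
  hdiag : ∀ i, n2 i i = 0
  q : Fin k → Fin k → ℕ
  hq1 : ∀ i j, 1 ≤ q i j
  hq2 : ∀ i j, q i j ≤ n1 j

namespace ICCDigraph

variable {k : ℕ} (D : ICCDigraph k)

/-- The vertex set: vertices `v_{a+1}^i = ⟨i, a⟩` of Type-I paths (0-based `a`),
and vertices `v_{b+1}^{ij} = ⟨(i,j), b⟩` of Type-II paths. -/
abbrev Vtx : Type :=
  (Σ i : Fin k, Fin (D.n1 i)) ⊕ (Σ p : Fin k × Fin k, Fin (D.n2 p.1 p.2))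

/-- The terminal vertex `v_{n_i}^i` of Type-I path `P_i`. -/
def terminal (i : Fin k) : D.Vtx :=
  Sum.inl ⟨i, ⟨D.n1 i - 1, by have := D.hn1 i; omega⟩⟩

/-- The arc relation of the ICC digraph: arcs along Type-I and Type-II paths,
and the interconnecting arcs. -/
def Arc : D.Vtx → D.Vtx → Prop
  | Sum.inl ⟨i, a⟩, Sum.inl ⟨j, a'⟩ =>
      (i = j ∧ (a' : ℕ) = (a : ℕ) + 1) ∨
      (i ≠ j ∧ (a : ℕ) = D.n1 i - 1 ∧ D.n2 i j = 0 ∧ (a' : ℕ) = D.q i j - 1)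
  | Sum.inl ⟨i, a⟩, Sum.inr ⟨p, b⟩ =>
      i = p.1 ∧ (a : ℕ) = D.n1 i - 1 ∧ (b : ℕ) = 0
  | Sum.inr ⟨p, b⟩, Sum.inr ⟨p', b'⟩ =>
      p = p' ∧ (b' : ℕ) = (b : ℕ) + 1
  | Sum.inr ⟨p, b⟩, Sum.inl ⟨j, a⟩ =>
      p.2 = j ∧ (b : ℕ) = D.n2 p.1 p.2 - 1 ∧ (a : ℕ) = D.q p.1 p.2 - 1

/-- A closed directed walk (cycle) starting and ending at `v`, visiting the
vertices `v :: l`. -/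
def IsClosedWalk (v : D.Vtx) (l : List D.Vtx) : Prop :=
  List.Chain D.Arc v (l ++ [v])

/-- `S` induces an acyclic subdigraph: no directed cycle lies within `S`. -/
def AcyclicOn (S : Finset D.Vtx) : Prop :=
  ¬ ∃ (v : D.Vtx) (l : List D.Vtx), v ∈ S ∧ (∀ u ∈ l, u ∈ S) ∧ D.IsClosedWalk v l

open Classical in
/-- `MAIS(D)`: the maximum order of an acyclic induced subdigraph. -/
noncomputable def mais : ℕ :=
  (Finset.univ.filter fun S : Finset D.Vtx => D.AcyclicOn S).sup Finset.card

/-- The message (1-based index `a`) of the `a`-th vertex of Type-I path `P_i`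
(`0` if out of range). -/
def msgI {t : ℕ} (x : D.Vtx → Fin t → ZMod 2) (i : Fin k) (a : ℕ) :
    Fin t → ZMod 2 :=
  if h : 1 ≤ a ∧ a ≤ D.n1 i then x (Sum.inl ⟨i, ⟨a - 1, by omega⟩⟩) else 0

/-- The message (1-based index `b`) of the `b`-th vertex of Type-II path
`P_{i,j}` (`0` if out of range). -/
def msgII {t : ℕ} (x : D.Vtx → Fin t → ZMod 2) (i j : Fin k) (b : ℕ) :
    Fin t → ZMod 2 :=
  if h : 1 ≤ b ∧ b ≤ D.n2 i j then x (Sum.inr ⟨(i, j), ⟨b - 1, by show b - 1 < D.n2 i j; omega⟩⟩) else 0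

/-- Index set of the ICC code's codewords: the `n_i - 1` codewords along each
Type-I path, the `n_{ij} - 1` codewords along each Type-II path, one codeword per
nonempty Type-II path, and the single codeword `⊕ᵢ x_{n_i}^i`. -/
abbrev CodeIdx : Type :=
  (Σ i : Fin k, Fin (D.n1 i - 1)) ⊕
    ((Σ p : Fin k × Fin k, Fin (D.n2 p.1 p.2 - 1)) ⊕
      (({p : Fin k × Fin k // 1 ≤ D.n2 p.1 p.2}) ⊕ Unit))

/-- The ICC code: `w_a^i = x_a^i ⊕ x_{a+1}^i`, `w_b^{ij} = x_b^{ij} ⊕ x_{b+1}^{ij}`,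
`w_{n_{ij}}^{ij} = x_{n_{ij}}^{ij} ⊕ x_{q_i}^j`, and `w' = ⊕ᵢ x_{n_i}^i`. -/
def code {t : ℕ} (x : D.Vtx → Fin t → ZMod 2) : D.CodeIdx → Fin t → ZMod 2
  | Sum.inl ⟨i, a⟩ => D.msgI x i ((a : ℕ) + 1) + D.msgI x i ((a : ℕ) + 2)
  | Sum.inr (Sum.inl ⟨p, b⟩) =>
      D.msgII x p.1 p.2 ((b : ℕ) + 1) + D.msgII x p.1 p.2 ((b : ℕ) + 2)
  | Sum.inr (Sum.inr (Sum.inl ⟨p, _⟩)) =>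
      D.msgII x p.1 p.2 (D.n2 p.1 p.2) + D.msgI x p.2 (D.q p.1 p.2)
  | Sum.inr (Sum.inr (Sum.inr _)) => ∑ i : Fin k, D.msgI x i (D.n1 i)

end ICCDigraph

lemma exists_succ_aux {α : Type*} {R : α → α → Prop} :
    ∀ (l : List α) (v z u : α), List.Chain R v (l ++ [z]) → u ∈ v :: l →
      ∃ w, w ∈ l ++ [z] ∧ R u w := by
  intro l
  induction l with
  | nil =>
    intro v z u h hu
    simp only [List.nil_append, List.chain_cons] at h
    simp only [List.mem_singleton] at hu
    subst hu
    exact ⟨z, by simp, (List.isChain_cons_cons.mp h).1⟩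
  | cons a l ih =>
    intro v z u h hu
    rw [List.cons_append, List.Chain, List.chain_cons] at h
    rcases List.mem_cons.mp hu with rfl | hu'
    · exact ⟨a, by simp, h.1⟩
    · obtain ⟨w, hw, hr⟩ := ih a z u h.2 hu'
      refine ⟨w, ?_, hr⟩
      simp only [List.cons_append, List.mem_cons]
      exact Or.inr hw

/-- Any directed cycle containing a vertex of Type-II path
`P_{i,j}` also contains the terminal vertex `v_{n_j}^j` of Type-I path `P_j`. -/
theorem stmt5 {k : ℕ} (D : ICCDigraph k) (i j : Fin k) (b : Fin (D.n2 i j))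
    (v : D.Vtx) (l : List D.Vtx) (hc : D.IsClosedWalk v l)
    (hmem : (Sum.inr ⟨(i, j), b⟩ : D.Vtx) ∈ v :: l) :
    D.terminal j ∈ v :: l := by
  have succ : ∀ u ∈ v :: l, ∃ w ∈ v :: l, D.Arc u w := by
    intro u hu
    obtain ⟨w, hw, hr⟩ := exists_succ_aux l v v u hc hu
    refine ⟨w, ?_, hr⟩
    rcases List.mem_append.mp hw with h | h
    · exact List.mem_cons_of_mem _ h
    · simp only [List.mem_singleton] at h
      subst h
      exact List.mem_cons_self
  -- Lemma A: walking along P_j, one eventually hits the terminal vertex.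
  have lemA : ∀ (m a : ℕ) (ha : a < D.n1 j), D.n1 j - 1 - a ≤ m →
      (Sum.inl ⟨j, ⟨a, ha⟩⟩ : D.Vtx) ∈ v :: l → D.terminal j ∈ v :: l := by
    intro m
    induction m with
    | zero =>
      intro a ha hle hm
      have heq : a = D.n1 j - 1 := by omega
      subst heq
      exact hm
    | succ m ih =>
      intro a ha hle hm
      by_cases hterm : a = D.n1 j - 1
      · subst hterm
        exact hm
      · obtain ⟨w, hw, harc⟩ := succ _ hm
        rcases w with ⟨j', a'⟩ | ⟨p', b'⟩
        · rcases harc with ⟨rfl, ha'⟩ | ⟨_, hcontra, _⟩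
          · have ha1 : a + 1 < D.n1 j := by omega
            have : (Sum.inl ⟨j, a'⟩ : D.Vtx)
                = (Sum.inl ⟨j, ⟨a + 1, ha1⟩⟩ : D.Vtx) := by
              congr 1
              exact congrArg _ (Fin.ext ha')
            rw [this] at hw
            exact ih (a + 1) ha1 (by omega) hw
          · exact absurd hcontra hterm
        · exact absurd harc.2.1 hterm
  -- Lemma B: walking along P_{i,j}, one eventually enters P_j at v_{q_{ij}}^j.
  have lemB : ∀ (m c : ℕ) (hcn : c < D.n2 i j), D.n2 i j - 1 - c ≤ m →
      (Sum.inr ⟨(i, j), ⟨c, hcn⟩⟩ : D.Vtx) ∈ v :: l → D.terminal j ∈ v :: l := by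
    intro m
    induction m with
    | zero =>
      intro c hcn hle hm
      obtain ⟨w, hw, harc⟩ := succ _ hm
      rcases w with ⟨j', a'⟩ | ⟨p', b'⟩
      · obtain ⟨hj, _, ha'⟩ := harc
        subst hj
        have haq : (a' : ℕ) < D.n1 j := a'.isLt
        have : (Sum.inl ⟨j, a'⟩ : D.Vtx)
            = (Sum.inl ⟨j, ⟨(a' : ℕ), haq⟩⟩ : D.Vtx) := by
          congr 1
        rw [this] at hw
        exact lemA (D.n1 j) (a' : ℕ) haq (by omega) hw
      · obtain ⟨hp, hb'⟩ := harc
        subst hp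
        have hb2 : (b' : ℕ) = c + 1 := by simpa using hb'
        have : (b' : ℕ) < D.n2 i j := b'.isLt
        omega
    | succ m ih =>
      intro c hcn hle hm
      obtain ⟨w, hw, harc⟩ := succ _ hm
      rcases w with ⟨j', a'⟩ | ⟨p', b'⟩
      · obtain ⟨hj, _, ha'⟩ := harc
        subst hj
        have haq : (a' : ℕ) < D.n1 j := a'.isLt
        have : (Sum.inl ⟨j, a'⟩ : D.Vtx)
            = (Sum.inl ⟨j, ⟨(a' : ℕ), haq⟩⟩ : D.Vtx) := by
          congr 1
        rw [this] at hw
        exact lemA (D.n1 j) (a' : ℕ) haq (by omega) hw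
      · obtain ⟨hp, hb'⟩ := harc
        subst hp
        have hb2 : (b' : ℕ) = c + 1 := by simpa using hb'
        have hb'lt : (b' : ℕ) < D.n2 i j := b'.isLt
        have : (Sum.inr ⟨(i, j), b'⟩ : D.Vtx)
            = (Sum.inr ⟨(i, j), ⟨c + 1, by omega⟩⟩ : D.Vtx) := by
          congr 1
          exact congrArg _ (Fin.ext hb2)
        rw [this] at hw
        exact ih (c + 1) (by omega) (by omega) hw
  have : (Sum.inr ⟨(i, j), b⟩ : D.Vtx)
      = (Sum.inr ⟨(i, j), ⟨(b : ℕ), b.isLt⟩⟩ : D.Vtx) := by congr 1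
  rw [this] at hmem
  exact lemB (D.n2 i j) (b : ℕ) b.isLt (by omega) hmem
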